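/- Let X = (0,1) ⊂ ℝ with its Borel σ-algebra, let α : (0,1) → (0,1) be measurable, let (J_k)_{k ∈ ℕ} be pairwise disjoint measurable subsets of (0,1), and let β_k : (0,1) → (0,1) be measurable maps with β_k((0,1)) ⊆ J_k and α(β_k(x)) = x for all x ∈ (0,1) and all k. Let (p_k)_{k ∈ ℕ} be nonnegative reals with Σ_k p_k = 1, and let μ be a Borel probability measure on (0,1) satisfying the iterated function system identity μ = Σ_k p_k · (Measure.map β_k μ). Then for every k ∈ ℕ: (a) μ(J_k) = p_k, and (b) ∫_{J_k} α(x) dμ(x) = p_k · ∫_{(0,1)} x dμ(x); in particular, if ∫ x dμ(x) ≠ 0 then p_k = (∫_{J_k} α dμ) / (∫ x dμ). -/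
import Mathlib


open MeasureTheory

/-- For an IFS measure `μ = Σ_k p_k · μ ∘ β_k⁻¹` on `(0,1)`, with inverse
branches `β_k` of `α` taking values in pairwise disjoint sets `J_k`:
`μ(J_k) = p_k` and `∫_{J_k} α dμ = p_k · ∫ x dμ`; in particular
`p_k = (∫_{J_k} α dμ) / (∫ x dμ)` whenever `∫ x dμ ≠ 0`. -/
theorem stmt_18
    (α : Set.Ioo (0 : ℝ) 1 → Set.Ioo (0 : ℝ) 1) (hα : Measurable α)
    (J : ℕ → Set (Set.Ioo (0 : ℝ) 1)) (hJ : ∀ k, MeasurableSet (J k))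
    (hJdisj : ∀ k l, k ≠ l → Disjoint (J k) (J l))
    (β : ℕ → Set.Ioo (0 : ℝ) 1 → Set.Ioo (0 : ℝ) 1) (hβ : ∀ k, Measurable (β k))
    (hβJ : ∀ k x, β k x ∈ J k)
    (hαβ : ∀ k x, α (β k x) = x)
    (p : ℕ → ℝ) (hp : ∀ k, 0 ≤ p k) (hpsum : ∑' k, p k = 1)
    (μ : Measure (Set.Ioo (0 : ℝ) 1)) [IsProbabilityMeasure μ]
    (hIFS : μ = Measure.sum fun k => ENNReal.ofReal (p k) • Measure.map (β k) μ) :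
    ∀ k : ℕ,
      μ (J k) = ENNReal.ofReal (p k) ∧
      (∫ x in J k, ((α x : ℝ)) ∂μ = p k * ∫ x, (x : ℝ) ∂μ) ∧
      ((∫ x, (x : ℝ) ∂μ) ≠ 0 →
        p k = (∫ x in J k, ((α x : ℝ)) ∂μ) / ∫ x, (x : ℝ) ∂μ) := by
  intro k
  have hm : MeasurableSet (J k) := hJ k
  -- part (a)
  have h1 : μ (J k) = ENNReal.ofReal (p k) := by
    conv_lhs => rw [hIFS]
    rw [Measure.sum_apply _ hm, tsum_eq_single k]
    · simp only [Measure.smul_apply, smul_eq_mul]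
      rw [Measure.map_apply (hβ k) hm]
      have hpre : (β k) ⁻¹' (J k) = Set.univ := by
        ext x; simp [hβJ k x]
      rw [hpre]
      simp
    · intro l hl
      simp only [Measure.smul_apply, smul_eq_mul]
      rw [Measure.map_apply (hβ l) hm]
      have hpre : (β l) ⁻¹' (J k) = ∅ := by
        ext x
        simp only [Set.mem_preimage, Set.mem_empty_iff_false, iff_false]
        exact fun h => Set.disjoint_left.mp (hJdisj l k hl) (hβJ l x) h
      rw [hpre]; simp
  -- part (b)
  have hαm : Measurable fun x => ((α x : ℝ)) := measurable_subtype_coe.comp hα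
  set f : Set.Ioo (0:ℝ) 1 → ℝ := (J k).indicator (fun x => (α x : ℝ)) with hf
  have hfm : Measurable f := hαm.indicator hm
  have hfb : ∀ x, ‖f x‖ ≤ 1 := by
    intro x
    by_cases hx : x ∈ J k
    · rw [hf, Set.indicator_of_mem hx]
      rw [Real.norm_eq_abs, abs_of_nonneg (le_of_lt (α x).2.1)]
      exact le_of_lt (α x).2.2
    · rw [hf, Set.indicator_of_notMem hx]; simp
  have hint : Integrable f μ :=
    ⟨hfm.aestronglyMeasurable, HasFiniteIntegral.of_bounded (C := 1) (ae_of_all _ hfb)⟩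
  have key : ∫ x in J k, ((α x : ℝ)) ∂μ = p k * ∫ x, (x : ℝ) ∂μ := by
    rw [← integral_indicator hm]
    calc ∫ x, f x ∂μ
        = ∫ x, f x ∂(Measure.sum fun l => ENNReal.ofReal (p l) • Measure.map (β l) μ) := by
          rw [← hIFS]
      _ = ∑' l, ∫ x, f x ∂(ENNReal.ofReal (p l) • Measure.map (β l) μ) :=
          integral_sum_measure (by rw [← hIFS]; exact hint)
      _ = p k * ∫ x, (x : ℝ) ∂μ := by
          rw [tsum_eq_single k]
          · rw [integral_smul_measure, ENNReal.toReal_ofReal (hp k),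
              integral_map (hβ k).aemeasurable hfm.aestronglyMeasurable]
            have heq : (fun x => f (β k x)) = fun x : Set.Ioo (0:ℝ) 1 => (x : ℝ) := by
              funext x
              rw [hf, Set.indicator_of_mem (hβJ k x), hαβ]
            rw [heq]
            simp
          · intro l hl
            rw [integral_smul_measure,
              integral_map (hβ l).aemeasurable hfm.aestronglyMeasurable]
            have heq : (fun x => f (β l x)) = fun _ => (0 : ℝ) := by
              funext x
              rw [hf, Set.indicator_of_notMem
                (Set.disjoint_left.mp (hJdisj l k hl) (hβJ l x))]
            rw [heq]
            simp
  refine ⟨h1, key, fun h => ?_⟩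
  rw [key]
  field_simp
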